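/- Let N ≥ 2 be an integer and let R be the (N−1)×(N−1) matrix with entries R_{kj} = r_{|k−j|}. Then R_{kk} > 0 for all k, R_{kj} < 0 for all k ≠ j, and R is strictly diagonally dominant: R_{kk} > Σ_{j≠k} |R_{kj}| for every 1 ≤ k ≤ N−1. -/

import Mathlib

/-- `r_p`, with the convention `m² ln|m| = 0` when `m = 0` (automatic since `Real.log 0 = 0`). -/
noncomputable def rFn (p : ℕ) : ℝ :=
  (1 / (2 * Real.pi)) *
    (((p : ℝ) - 2) ^ 2 * Real.log |(p : ℝ) - 2| - 4 * ((p : ℝ) - 1) ^ 2 * Real.log |(p : ℝ) - 1|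
      + 6 * (p : ℝ) ^ 2 * Real.log (p : ℝ) - 4 * ((p : ℝ) + 1) ^ 2 * Real.log ((p : ℝ) + 1)
      + ((p : ℝ) + 2) ^ 2 * Real.log ((p : ℝ) + 2))

open Real

noncomputable def fF (x : ℝ) : ℝ := x ^ 2 * Real.log x
noncomputable def hF (x : ℝ) : ℝ := fF (x + 1) - fF x
noncomputable def uF (x : ℝ) : ℝ := fF (x + 1) - 2 * fF x + fF (x - 1)

lemma fF_cont : Continuous fF := by
  have : fF = fun x => x * (x * Real.log x) := by
    funext x; simp [fF]; ring
  rw [this]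
  exact continuous_id.mul Real.continuous_mul_log

lemma hasDerivAt_fF {x : ℝ} (hx : x ≠ 0) :
    HasDerivAt fF (2 * x * Real.log x + x) x := by
  have h1 : HasDerivAt (fun y : ℝ => y ^ 2) (2 * x) x := by
    simpa using hasDerivAt_pow 2 x
  have h2 := Real.hasDerivAt_log hx
  have := h1.mul h2
  refine this.congr_deriv ?_
  field_simp

noncomputable def hF1 (x : ℝ) : ℝ :=
  (2 * (x + 1) * Real.log (x + 1) + (x + 1)) - (2 * x * Real.log x + x)

lemma hasDerivAt_hF {x : ℝ} (hx : 0 < x) : HasDerivAt hF (hF1 x) x := by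
  have h1 : HasDerivAt (fun y : ℝ => fF (y + 1))
      (2 * (x + 1) * Real.log (x + 1) + (x + 1)) x := by
    have := (hasDerivAt_fF (x := x + 1) (by linarith)).comp x
      ((hasDerivAt_id x).add_const 1)
    simpa [Function.comp_def] using this
  exact h1.sub (hasDerivAt_fF hx.ne')

lemma hasDerivAt_hF1 {x : ℝ} (hx : 0 < x) :
    HasDerivAt hF1 (2 * Real.log (x + 1) - 2 * Real.log x) x := by
  have l1 : HasDerivAt (fun y : ℝ => Real.log (y + 1)) (x + 1)⁻¹ x := by
    have := (Real.hasDerivAt_log (x := x + 1) (by linarith)).comp x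
      ((hasDerivAt_id x).add_const 1)
    simpa [Function.comp_def] using this
  have a1 : HasDerivAt (fun y : ℝ => 2 * (y + 1) * Real.log (y + 1))
      (2 * Real.log (x + 1) + 2 * (x + 1) * (x + 1)⁻¹) x := by
    have hmul : HasDerivAt (fun y : ℝ => 2 * (y + 1)) 2 x := by
      simpa using ((hasDerivAt_id x).add_const 1).const_mul 2
    simpa [Pi.mul_def] using hmul.mul l1
  have a2 : HasDerivAt (fun y : ℝ => 2 * y * Real.log y)
      (2 * Real.log x + 2 * x * x⁻¹) x := by
    have hmul : HasDerivAt (fun y : ℝ => 2 * y) 2 x := by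
      simpa using (hasDerivAt_id x).const_mul 2
    simpa [Pi.mul_def] using hmul.mul (Real.hasDerivAt_log hx.ne')
  have := (a1.add ((hasDerivAt_id x).add_const 1)).sub
    (a2.add (hasDerivAt_id x))
  refine this.congr_deriv ?_
  have h1 : (x : ℝ) + 1 ≠ 0 := by linarith
  field_simp
  try ring

lemma deriv2_hF {x : ℝ} (hx : 0 < x) :
    deriv^[2] hF x = 2 * Real.log (x + 1) - 2 * Real.log x := by
  have heq : deriv hF =ᶠ[nhds x] hF1 := by
    filter_upwards [Ioi_mem_nhds hx] with y hy
    exact (hasDerivAt_hF hy).deriv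
  have : deriv (deriv hF) x = deriv hF1 x := heq.deriv_eq
  simp only [Function.iterate_succ, Function.iterate_zero, Function.comp_apply, id_eq]
  rw [this, (hasDerivAt_hF1 hx).deriv]

lemma hF_convex : StrictConvexOn ℝ (Set.Ici (0:ℝ)) hF := by
  apply strictConvexOn_of_deriv2_pos (convex_Ici 0)
  · exact (fF_cont.comp (continuous_id.add continuous_const)).sub fF_cont |>.continuousOn
  · intro x hx
    rw [interior_Ici] at hx
    rw [deriv2_hF hx]
    have := Real.log_lt_log hx (by linarith : x < x + 1)
    linarith

noncomputable def uF1 (x : ℝ) : ℝ :=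
  (2 * (x + 1) * Real.log (x + 1) + (x + 1)) - 2 * (2 * x * Real.log x + x)
    + (2 * (x - 1) * Real.log (x - 1) + (x - 1))

lemma hasDerivAt_uF {x : ℝ} (hx : 1 < x) : HasDerivAt uF (uF1 x) x := by
  have h1 : HasDerivAt (fun y : ℝ => fF (y + 1))
      (2 * (x + 1) * Real.log (x + 1) + (x + 1)) x := by
    have := (hasDerivAt_fF (x := x + 1) (by linarith)).comp x
      ((hasDerivAt_id x).add_const 1)
    simpa [Function.comp_def] using this
  have h3 : HasDerivAt (fun y : ℝ => fF (y - 1))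
      (2 * (x - 1) * Real.log (x - 1) + (x - 1)) x := by
    have := (hasDerivAt_fF (x := x - 1) (by intro h; nlinarith [h])).comp x
      ((hasDerivAt_id x).sub_const 1)
    simpa [Function.comp_def] using this
  have h2 := (hasDerivAt_fF (x := x) (by linarith)).const_mul 2
  exact (h1.sub h2).add h3

lemma hasDerivAt_uF1 {x : ℝ} (hx : 1 < x) :
    HasDerivAt uF1
      (2 * Real.log (x + 1) - 4 * Real.log x + 2 * Real.log (x - 1)) x := by
  have l1 : HasDerivAt (fun y : ℝ => Real.log (y + 1)) (x + 1)⁻¹ x := by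
    have := (Real.hasDerivAt_log (x := x + 1) (by linarith)).comp x
      ((hasDerivAt_id x).add_const 1)
    simpa [Function.comp_def] using this
  have l3 : HasDerivAt (fun y : ℝ => Real.log (y - 1)) (x - 1)⁻¹ x := by
    have := (Real.hasDerivAt_log (x := x - 1) (by intro h; nlinarith [h])).comp x
      ((hasDerivAt_id x).sub_const 1)
    simpa [Function.comp_def] using this
  have a1 : HasDerivAt (fun y : ℝ => 2 * (y + 1) * Real.log (y + 1))
      (2 * Real.log (x + 1) + 2 * (x + 1) * (x + 1)⁻¹) x := by
    have hmul : HasDerivAt (fun y : ℝ => 2 * (y + 1)) 2 x := by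
      simpa using ((hasDerivAt_id x).add_const 1).const_mul 2
    simpa [Pi.mul_def] using hmul.mul l1
  have a2 : HasDerivAt (fun y : ℝ => 2 * y * Real.log y)
      (2 * Real.log x + 2 * x * x⁻¹) x := by
    have hmul : HasDerivAt (fun y : ℝ => 2 * y) 2 x := by
      simpa using (hasDerivAt_id x).const_mul 2
    simpa [Pi.mul_def] using hmul.mul (Real.hasDerivAt_log (by linarith))
  have a3 : HasDerivAt (fun y : ℝ => 2 * (y - 1) * Real.log (y - 1))
      (2 * Real.log (x - 1) + 2 * (x - 1) * (x - 1)⁻¹) x := by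
    have hmul : HasDerivAt (fun y : ℝ => 2 * (y - 1)) 2 x := by
      simpa using ((hasDerivAt_id x).sub_const 1).const_mul 2
    simpa [Pi.mul_def] using hmul.mul l3
  have := ((a1.add ((hasDerivAt_id x).add_const 1)).sub
      ((a2.add (hasDerivAt_id x)).const_mul 2)).add
      (a3.add ((hasDerivAt_id x).sub_const 1))
  refine this.congr_deriv ?_
  have h1 : (x : ℝ) + 1 ≠ 0 := by linarith
  have h2 : (x : ℝ) ≠ 0 := by linarith
  have h3 : (x : ℝ) - 1 ≠ 0 := by intro h; nlinarith [h]
  field_simp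
  try ring

lemma deriv2_uF {x : ℝ} (hx : 1 < x) :
    deriv^[2] uF x = 2 * Real.log (x + 1) - 4 * Real.log x + 2 * Real.log (x - 1) := by
  have heq : deriv uF =ᶠ[nhds x] uF1 := by
    filter_upwards [Ioi_mem_nhds hx] with y hy
    exact (hasDerivAt_uF hy).deriv
  have : deriv (deriv uF) x = deriv uF1 x := heq.deriv_eq
  simp only [Function.iterate_succ, Function.iterate_zero, Function.comp_apply, id_eq]
  rw [this, (hasDerivAt_uF1 hx).deriv]

lemma uF_concave : StrictConcaveOn ℝ (Set.Ici (1:ℝ)) uF := by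
  apply strictConcaveOn_of_deriv2_neg (convex_Ici 1)
  · exact (((fF_cont.comp (continuous_id.add continuous_const)).sub
      (continuous_const.mul fF_cont)).add
      (fF_cont.comp (continuous_id.sub continuous_const))).continuousOn
  · intro x hx
    rw [interior_Ici] at hx
    rw [deriv2_uF hx]
    have hx' : (1:ℝ) < x := hx
    have hx0 : (0:ℝ) < x := by linarith
    have key : Real.log (x + 1) + Real.log (x - 1) < 2 * Real.log x := by
      rw [← Real.log_mul (by linarith) (by intro h; nlinarith [h]),
        show (2:ℝ) * Real.log x = Real.log (x * x) by
          rw [Real.log_mul hx0.ne' hx0.ne']; ring]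
      apply Real.log_lt_log (by nlinarith)
      nlinarith
    linarith

noncomputable def cC : ℝ := 1 / (2 * Real.pi)

lemma cC_pos : 0 < cC := by
  have := Real.pi_pos
  unfold cC; positivity

noncomputable def GG (x : ℝ) : ℝ := hF x - 2 * hF (x - 1) + hF (x - 2)

lemma rFn_eq_f (p : ℕ) :
    rFn p = cC * (fF ((p:ℝ) - 2) - 4 * fF ((p:ℝ) - 1) + 6 * fF (p:ℝ)
      - 4 * fF ((p:ℝ) + 1) + fF ((p:ℝ) + 2)) := by
  unfold rFn cC fF
  rw [Real.log_abs, Real.log_abs]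
  ring

lemma rFn_eq_G (p : ℕ) : rFn p = cC * (GG ((p:ℝ) + 1) - GG (p:ℝ)) := by
  rw [rFn_eq_f]
  unfold GG hF
  ring_nf

lemma rFn_eq_u (p : ℕ) :
    rFn p = cC * ((uF ((p:ℝ) + 1) + uF ((p:ℝ) - 1)) - 2 * uF (p:ℝ)) := by
  rw [rFn_eq_f]
  unfold uF
  ring_nf

lemma G_eq (x : ℝ) : GG x = fF (x + 1) - 3 * fF x + 3 * fF (x - 1) - fF (x - 2) := by
  unfold GG hF
  ring_nf

lemma fF_zero : fF 0 = 0 := by simp [fF]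
lemma fF_one : fF 1 = 0 := by simp [fF]
lemma fF_neg_one : fF (-1 : ℝ) = 0 := by
  simp [fF, show (-1:ℝ) = -(1:ℝ) by norm_num, Real.log_neg_eq_log]

lemma GG_one : GG 1 = 4 * Real.log 2 := by
  rw [G_eq]
  norm_num [fF_zero, fF_one, fF_neg_one]
  unfold fF
  norm_num

lemma GG_pos {m : ℕ} (hm : 1 ≤ m) : 0 < GG (m : ℝ) := by
  rcases eq_or_lt_of_le hm with h | h
  · rw [← h]; push_cast; rw [GG_one]
    have := Real.log_pos (by norm_num : (1:ℝ) < 2)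
    linarith
  · -- m ≥ 2 : use convexity of hF on Ici 0
    have hm2 : (2:ℝ) ≤ (m:ℝ) := by exact_mod_cast h
    have hx : ((m:ℝ) - 2) ∈ Set.Ici (0:ℝ) := by simp only [Set.mem_Ici]; linarith
    have hy : ((m:ℝ)) ∈ Set.Ici (0:ℝ) := by simp only [Set.mem_Ici]; linarith
    have hne : ((m:ℝ) - 2) ≠ (m:ℝ) := by intro hh; linarith [hh]
    have := hF_convex.2 hx hy hne (by norm_num : (0:ℝ) < 1/2)
      (by norm_num : (0:ℝ) < 1/2) (by norm_num)
    simp only [smul_eq_mul] at this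
    have hmid : (1/2 : ℝ) * ((m:ℝ) - 2) + 1/2 * (m:ℝ) = (m:ℝ) - 1 := by ring
    rw [hmid] at this
    unfold GG
    linarith

lemma rFn_neg {p : ℕ} (hp : 1 ≤ p) : rFn p < 0 := by
  rcases eq_or_lt_of_le hp with h | h
  · -- p = 1 : rFn 1 = cC * (9 log 3 - 16 log 2) < 0
    rw [← h, rFn_eq_f]
    apply mul_neg_of_pos_of_neg cC_pos
    push_cast
    norm_num [fF_zero, fF_one, fF_neg_one]
    unfold fF
    have : (9:ℝ) * Real.log 3 < 16 * Real.log 2 := by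
      rw [show (9:ℝ) * Real.log 3 = Real.log (3 ^ (9:ℕ)) by rw [Real.log_pow]; norm_num,
        show (16:ℝ) * Real.log 2 = Real.log (2 ^ (16:ℕ)) by rw [Real.log_pow]; norm_num]
      apply Real.log_lt_log (by positivity)
      norm_num
    norm_num
    nlinarith [this]
  · -- p ≥ 2 : use concavity of uF on Ici 1
    have hp2 : (2:ℝ) ≤ (p:ℝ) := by exact_mod_cast h
    have hx : ((p:ℝ) - 1) ∈ Set.Ici (1:ℝ) := by simp only [Set.mem_Ici]; linarith
    have hy : ((p:ℝ) + 1) ∈ Set.Ici (1:ℝ) := by simp only [Set.mem_Ici]; linarith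
    have hne : ((p:ℝ) - 1) ≠ ((p:ℝ) + 1) := by intro hh; linarith [hh]
    have := uF_concave.2 hx hy hne (by norm_num : (0:ℝ) < 1/2)
      (by norm_num : (0:ℝ) < 1/2) (by norm_num)
    simp only [smul_eq_mul] at this
    have hmid : (1/2 : ℝ) * ((p:ℝ) - 1) + 1/2 * ((p:ℝ) + 1) = (p:ℝ) := by ring
    rw [hmid] at this
    rw [rFn_eq_u]
    apply mul_neg_of_pos_of_neg cC_pos
    linarith

lemma rFn_zero_eq : rFn 0 = 2 * (cC * GG 1) := by
  rw [rFn_eq_f, GG_one]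
  unfold fF
  norm_num [Real.log_neg_eq_log]
  try ring

noncomputable def TT (m : ℕ) : ℝ := ∑ i ∈ Finset.range m, (-(rFn (i + 1)))

lemma TT_eq (m : ℕ) : TT m = cC * GG 1 - cC * GG ((m:ℝ) + 1) := by
  induction m with
  | zero => simp [TT]
  | succ n ih =>
    rw [TT, Finset.sum_range_succ, ← TT, ih, rFn_eq_G (n + 1)]
    push_cast
    ring

lemma TT_lt (m : ℕ) : TT m < cC * GG 1 := by
  rw [TT_eq]
  have h1 : 0 < GG (((m + 1 : ℕ)):ℝ) := GG_pos (Nat.le_add_left 1 m)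
  push_cast at h1
  nlinarith [cC_pos]

lemma rFn_zero_pos : 0 < rFn 0 := by
  rw [rFn_zero_eq, GG_one]
  have := Real.log_pos (by norm_num : (1:ℝ) < 2)
  have := cC_pos
  positivity

theorem stmt13 (N : ℕ) (hN : 2 ≤ N)
    (R : Matrix (Fin (N - 1)) (Fin (N - 1)) ℝ)
    (hR : ∀ k j, R k j = rFn (((k : ℕ) : ℤ) - ((j : ℕ) : ℤ)).natAbs) :
    (∀ k, 0 < R k k) ∧
    (∀ k j, k ≠ j → R k j < 0) ∧
    (∀ k, ∑ j ∈ Finset.univ.filter (fun j => j ≠ k), |R k j| < R k k) := by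
  have hdiag : ∀ k : Fin (N - 1), R k k = rFn 0 := by
    intro k; rw [hR]; simp
  have hoff : ∀ k j : Fin (N - 1), k ≠ j → R k j < 0 := by
    intro k j hkj
    rw [hR]
    apply rFn_neg
    have : (k : ℕ) ≠ (j : ℕ) := fun h => hkj (Fin.val_injective h)
    omega
  refine ⟨fun k => by rw [hdiag]; exact rFn_zero_pos, hoff, ?_⟩
  intro k
  have hkn : (k : ℕ) < N - 1 := k.isLt
  set F : ℕ → ℝ := fun m => -(rFn (((k : ℕ) : ℤ) - (m : ℤ)).natAbs) with hF
  have step1 : ∑ j ∈ Finset.univ.filter (fun j => j ≠ k), |R k j|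
      = ∑ j ∈ Finset.univ.filter (fun j => j ≠ k), F (j : ℕ) := by
    apply Finset.sum_congr rfl
    intro j hj
    have hjk : j ≠ k := (Finset.mem_filter.mp hj).2
    have hneg : rFn (((k : ℕ) : ℤ) - ((j : ℕ) : ℤ)).natAbs < 0 := by
      rw [← hR]; exact hoff k j (Ne.symm hjk)
    rw [hR, abs_of_neg hneg]
  rw [step1, Finset.filter_ne', Finset.sum_erase_eq_sub (Finset.mem_univ k)]
  have step2 : ∑ j : Fin (N - 1), F (j : ℕ) = ∑ m ∈ Finset.range (N - 1), F m :=
    Fin.sum_univ_eq_sum_range F (N - 1)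
  have split : ∑ m ∈ Finset.range (N - 1), F m
      = ∑ m ∈ Finset.range (k : ℕ), F m + F (k : ℕ)
        + ∑ m ∈ Finset.Ico ((k : ℕ) + 1) (N - 1), F m := by
    have h1 : ∑ m ∈ Finset.range ((k : ℕ) + 1), F m
        + ∑ m ∈ Finset.Ico ((k : ℕ) + 1) (N - 1), F m
        = ∑ m ∈ Finset.range (N - 1), F m := by
      rw [Finset.range_eq_Ico, Finset.range_eq_Ico]
      exact Finset.sum_Ico_consecutive F (Nat.zero_le ((k : ℕ) + 1)) (by omega : (k : ℕ) + 1 ≤ N - 1)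
    rw [← h1, Finset.sum_range_succ]
  have left : ∑ m ∈ Finset.range (k : ℕ), F m = TT (k : ℕ) := by
    have hrefl := Finset.sum_range_reflect (fun i => -(rFn (i + 1))) (k : ℕ)
    rw [TT, ← hrefl]
    apply Finset.sum_congr rfl
    intro m hm
    have hm' : m < (k : ℕ) := Finset.mem_range.mp hm
    have : (((k : ℕ) : ℤ) - (m : ℤ)).natAbs = (k : ℕ) - 1 - m + 1 := by omega
    simp only [hF, this]
  have right : ∑ m ∈ Finset.Ico ((k : ℕ) + 1) (N - 1), F m = TT (N - 1 - 1 - (k : ℕ)) := by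
    rw [Finset.sum_Ico_eq_sum_range,
      show N - 1 - ((k : ℕ) + 1) = N - 1 - 1 - (k : ℕ) by omega, TT]
    apply Finset.sum_congr rfl
    intro i hi
    have : (((k : ℕ) : ℤ) - (((k : ℕ) + 1 + i : ℕ) : ℤ)).natAbs = i + 1 := by
      push_cast; omega
    simp only [hF, this]
  have hFk : F (k : ℕ) = -(rFn 0) := by simp [hF]
  rw [step2, split, left, right, hFk, hdiag, rFn_zero_eq]
  have h1 := TT_lt (k : ℕ)
  have h2 := TT_lt (N - 1 - 1 - (k : ℕ))
  linarith
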